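/- For a prime p dividing n, the polynomials Θ_p(y^(p)_0), ..., Θ_p(y^(p)_{n_p - 1}) are algebraically independent over ℂ; equivalently, the ring homomorphism ρ : ℂ[z_0,...,z_{n_p-1}] → ℂ[x_0,...,x_{n-1}] with ρ(z_i) = Θ_p(y^(p)_i) is injective. -/

import Mathlib

open MvPolynomial

/-- The variable `y^(p)_{i,j} = ∑_{l<n/p} ζ^{i(j+pl)} x_{j+pl}`. -/
noncomputable def ypVar (n p : ℕ) [NeZero n] (ζ : ℂ) (i j : ℕ) :
    MvPolynomial (ZMod n) ℂ :=
  ∑ l ∈ Finset.range (n / p), C (ζ ^ (i * (j + p * l))) * X ((j + p * l : ℕ) : ZMod n)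

/-- The circulant determinant of order `p` with first column `a_0, …, a_{p-1}`. -/
def thetaCirc {R : Type*} [CommRing R] (p : ℕ) (a : ℕ → R) : R :=
  (Matrix.circulant fun j : Fin p => a (j : ℕ)).det

/-- orthogonality of roots of unity -/
lemma geom_orth (ξ : ℂ) (N : ℕ) (hN : ξ ^ N = 1) :
    ∑ l ∈ Finset.range N, ξ ^ l = if ξ = 1 then (N : ℂ) else 0 := by
  split_ifs with h
  · simp [h]
  · have h2 := geom_sum_mul ξ N
    rw [hN, sub_self] at h2
    rcases mul_eq_zero.mp h2 with h3 | h3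
    · exact h3
    · exact absurd (sub_eq_zero.mp h3) h

lemma sum_range_mul' {M : Type*} [AddCommMonoid M] (f : ℕ → M) (a b : ℕ) :
    ∑ k ∈ Finset.range (a * b), f k
      = ∑ j ∈ Finset.range b, ∑ r ∈ Finset.range a, f (r + a * j) := by
  induction b with
  | zero => simp
  | succ b ih =>
      rw [Nat.mul_succ, Finset.sum_range_add, ih, Finset.sum_range_succ]
      congr 1
      exact Finset.sum_congr rfl fun r _ => by rw [Nat.add_comm]

/-- The target of the left inverse: `t k = X k` if `k < q` and `1` otherwise. -/
noncomputable def tAux (q k : ℕ) : MvPolynomial (Fin q) ℂ :=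
  if h : k < q then X (⟨k, h⟩ : Fin q) else 1

/-- The left inverse on variables: inverse DFT. -/
noncomputable def uAux (n q : ℕ) [NeZero n] (ζ : ℂ) (v : ZMod n) :
    MvPolynomial (Fin q) ℂ :=
  C ((n : ℂ)⁻¹) * ∑ k ∈ Finset.range n, C (ζ⁻¹ ^ (k * v.val)) * tAux q k

lemma key1 (n p q : ℕ) [NeZero n] (hp : 0 < p) (hq : 0 < q) (hn' : n = q * p)
    (ζ : ℂ) (hζ : IsPrimitiveRoot ζ n) (i j : ℕ) (hi : i < q) (hj : j < p) :
    aeval (uAux n q ζ) (ypVar n p ζ i j)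
      = C ((p : ℂ)⁻¹) *
          ∑ j' ∈ Finset.range p, C ((ζ⁻¹ ^ (q * j')) ^ j) * tAux q (i + q * j') := by
  have hn0 : n ≠ 0 := NeZero.ne n
  have hζ0 : ζ ≠ 0 := hζ.ne_zero hn0
  have hz1 : ζ ^ n = 1 := hζ.pow_eq_one
  have hzi1 : ζ⁻¹ ^ n = 1 := by rw [inv_pow, hz1, inv_one]
  have hnp : n / p = q := by rw [hn', Nat.mul_div_cancel _ hp]
  have hlt : ∀ l ∈ Finset.range q, j + p * l < n := by
    intro l hl
    rw [Finset.mem_range] at hl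
    calc j + p * l < p + p * l := by omega
    _ = p * (l + 1) := by ring
    _ ≤ p * q := Nat.mul_le_mul_left p hl
    _ = n := by rw [hn', Nat.mul_comm]
  set ξ : ℕ → ℂ := fun k => ζ ^ i * ζ⁻¹ ^ k with hξ
  have hξn : ∀ k, ξ k ^ n = 1 := by
    intro k
    rw [hξ]
    simp only
    rw [mul_pow, ← pow_mul, ← pow_mul, mul_comm i n, mul_comm k n, pow_mul, pow_mul,
      hz1, hzi1, one_pow, one_pow, one_mul]
  -- step 1 : expand and swap sums
  have step1 : aeval (uAux n q ζ) (ypVar n p ζ i j)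
      = ∑ k ∈ Finset.range n, C ((n : ℂ)⁻¹) *
          (C (ξ k ^ j * ∑ l ∈ Finset.range q, (ξ k ^ p) ^ l) * tAux q k) := by
    rw [ypVar, map_sum, hnp]
    calc ∑ l ∈ Finset.range q,
          (aeval (uAux n q ζ)) (C (ζ ^ (i * (j + p * l))) * X ((j + p * l : ℕ) : ZMod n))
        = ∑ l ∈ Finset.range q, ∑ k ∈ Finset.range n,
            C ((n : ℂ)⁻¹) *
              (C (ζ ^ (i * (j + p * l)) * ζ⁻¹ ^ (k * (j + p * l))) * tAux q k) := by
          refine Finset.sum_congr rfl fun l hl => ?_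
          rw [map_mul, aeval_C, aeval_X, algebraMap_eq, uAux,
            ZMod.val_natCast_of_lt (hlt l hl), Finset.mul_sum, Finset.mul_sum]
          refine Finset.sum_congr rfl fun k _ => ?_
          rw [map_mul]
          ring
      _ = ∑ k ∈ Finset.range n, C ((n : ℂ)⁻¹) *
            (C (∑ l ∈ Finset.range q, ζ ^ (i * (j + p * l)) * ζ⁻¹ ^ (k * (j + p * l)))
              * tAux q k) := by
          rw [Finset.sum_comm]
          refine Finset.sum_congr rfl fun k _ => ?_
          rw [map_sum, Finset.sum_mul, Finset.mul_sum]
      _ = ∑ k ∈ Finset.range n, C ((n : ℂ)⁻¹) *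
            (C (ξ k ^ j * ∑ l ∈ Finset.range q, (ξ k ^ p) ^ l) * tAux q k) := by
          refine Finset.sum_congr rfl fun k _ => ?_
          have he : (∑ l ∈ Finset.range q, ζ ^ (i * (j + p * l)) * ζ⁻¹ ^ (k * (j + p * l)))
              = ξ k ^ j * ∑ l ∈ Finset.range q, (ξ k ^ p) ^ l := by
            rw [Finset.mul_sum]
            refine Finset.sum_congr rfl fun l _ => ?_
            rw [hξ]
            simp only
            rw [pow_mul, pow_mul, ← mul_pow, pow_add, pow_mul]
          rw [he]
  rw [step1, show Finset.range n = Finset.range (q * p) by rw [hn'], sum_range_mul',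
    Finset.mul_sum]
  have hqc : (q : ℂ) ≠ 0 := Nat.cast_ne_zero.mpr hq.ne'
  have hpc : (p : ℂ) ≠ 0 := Nat.cast_ne_zero.mpr hp.ne'
  refine Finset.sum_congr rfl fun j' _ => ?_
  have hxi : ξ (i + q * j') = ζ⁻¹ ^ (q * j') := by
    rw [hξ]
    simp only
    rw [pow_add, ← mul_assoc, inv_pow, mul_inv_cancel₀ (pow_ne_zero _ hζ0), one_mul]
  have hxp : ∀ r, ξ (r + q * j') ^ p = ζ ^ (i * p) * ζ⁻¹ ^ (r * p) := by
    intro r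
    rw [hξ]
    simp only
    rw [mul_pow, ← pow_mul, ← pow_mul,
      show (r + q * j') * p = r * p + n * j' by rw [hn']; ring,
      pow_add, pow_mul ζ⁻¹ n j', hzi1, one_pow, mul_one]
  rw [Finset.sum_eq_single_of_mem i (Finset.mem_range.mpr hi)]
  · have h1 : ξ (i + q * j') ^ p = 1 := by
      rw [hxp i, inv_pow, mul_inv_cancel₀ (pow_ne_zero _ hζ0)]
    rw [h1, hxi]
    have h2 : (∑ l ∈ Finset.range q, (1 : ℂ) ^ l) = (q : ℂ) := by simp
    rw [h2, ← mul_assoc, ← mul_assoc, ← C_mul, ← C_mul]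
    congr 2
    rw [hn']
    push_cast
    field_simp
  · intro r hr hri
    have h1 : ξ (r + q * j') ^ p ≠ 1 := by
      rw [Ne, hxp r, inv_pow, mul_inv_eq_one₀ (pow_ne_zero _ hζ0)]
      intro h
      have hilt : i * p < n := by
        rw [hn']
        exact (Nat.mul_lt_mul_right hp).mpr hi
      have hrlt : r * p < n := by
        rw [hn']
        exact (Nat.mul_lt_mul_right hp).mpr (Finset.mem_range.mp hr)
      exact hri (Nat.eq_of_mul_eq_mul_right hp (hζ.pow_inj hilt hrlt h)).symm
    have hcert : (ξ (r + q * j') ^ p) ^ q = 1 := by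
      rw [← pow_mul, show p * q = n by rw [hn']; ring]
      exact hξn _
    rw [geom_orth (ξ (r + q * j') ^ p) q hcert, if_neg h1]
    simp

lemma key2 (n p q : ℕ) [NeZero n] (hp : p.Prime) (hq : 0 < q) (hn' : n = q * p)
    (ζ : ℂ) (hζ : IsPrimitiveRoot ζ n) (i : Fin q) :
    aeval (uAux n q ζ) (thetaCirc p fun j => ypVar n p ζ (i : ℕ) j) = X i := by
  have hn0 : n ≠ 0 := NeZero.ne n
  have hζ0 : ζ ≠ 0 := hζ.ne_zero hn0
  have hzi1 : ζ⁻¹ ^ n = 1 := by rw [inv_pow, hζ.pow_eq_one, inv_one]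
  have hpc : (p : ℂ) ≠ 0 := Nat.cast_ne_zero.mpr hp.ne_zero
  haveI : NeZero p := ⟨hp.ne_zero⟩
  have hω : IsPrimitiveRoot (ζ⁻¹ ^ q) p := by
    have h1 := (hζ.pow (Nat.pos_of_ne_zero hn0) hn').inv
    rwa [← inv_pow] at h1
  have hsum : ∀ d : ℕ, d < p →
      ∑ j' ∈ Finset.range p, C ((ζ⁻¹ ^ (q * j')) ^ d) * tAux q ((i : ℕ) + q * j')
        = (X i - 1) + if d = 0 then C ((p : ℂ)) else 0 := by
    intro d hd
    have hre : ∀ j' : ℕ, (ζ⁻¹ ^ (q * j')) ^ d = ((ζ⁻¹ ^ q) ^ d) ^ j' := by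
      intro j'
      rw [← pow_mul, ← pow_mul, ← pow_mul]
      congr 1
      ring
    have hiff : (ζ⁻¹ ^ q) ^ d = 1 ↔ d = 0 := by
      rw [hω.pow_eq_one_iff_dvd]
      exact ⟨fun h => Nat.eq_zero_of_dvd_of_lt h hd, fun h => h ▸ dvd_zero p⟩
    have hsplit : ∑ j' ∈ Finset.range p,
        (C ((ζ⁻¹ ^ (q * j')) ^ d) * tAux q ((i : ℕ) + q * j') - C ((ζ⁻¹ ^ (q * j')) ^ d))
          = X i - 1 := by
      rw [Finset.sum_eq_single_of_mem 0 (Finset.mem_range.mpr hp.pos)]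
      · simp [tAux, i.isLt]
      · intro b _ hb0
        have hb1 : ¬ ((i : ℕ) + q * b < q) := by
          have : q * 1 ≤ q * b := Nat.mul_le_mul_left q (Nat.one_le_iff_ne_zero.mpr hb0)
          omega
        rw [tAux, dif_neg hb1, mul_one, sub_self]
    have hcert : ((ζ⁻¹ ^ q) ^ d) ^ p = 1 := by
      rw [show ((ζ⁻¹ ^ q) ^ d) ^ p = ζ⁻¹ ^ (n * d) by
          rw [← pow_mul, ← pow_mul]
          congr 1
          rw [hn']
          ring,
        pow_mul, hzi1, one_pow]
    have hgeo : ∑ j' ∈ Finset.range p, (C ((ζ⁻¹ ^ (q * j')) ^ d) : MvPolynomial (Fin q) ℂ)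
        = if d = 0 then C ((p : ℂ)) else 0 := by
      calc ∑ j' ∈ Finset.range p, (C ((ζ⁻¹ ^ (q * j')) ^ d) : MvPolynomial (Fin q) ℂ)
          = C (∑ j' ∈ Finset.range p, ((ζ⁻¹ ^ q) ^ d) ^ j') := by
            rw [map_sum]
            exact Finset.sum_congr rfl fun j' _ => by rw [hre j']
        _ = if d = 0 then C ((p : ℂ)) else 0 := by
            rw [geom_orth ((ζ⁻¹ ^ q) ^ d) p hcert]
            by_cases hd0 : d = 0
            · rw [if_pos (hiff.mpr hd0), if_pos hd0]
            · rw [if_neg (fun h => hd0 (hiff.mp h)), if_neg hd0, map_zero]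
    calc ∑ j' ∈ Finset.range p, C ((ζ⁻¹ ^ (q * j')) ^ d) * tAux q ((i : ℕ) + q * j')
        = ∑ j' ∈ Finset.range p,
            ((C ((ζ⁻¹ ^ (q * j')) ^ d) * tAux q ((i : ℕ) + q * j')
              - C ((ζ⁻¹ ^ (q * j')) ^ d)) + C ((ζ⁻¹ ^ (q * j')) ^ d)) := by
          exact Finset.sum_congr rfl fun _ _ => by ring
      _ = (X i - 1) + if d = 0 then C ((p : ℂ)) else 0 := by
          rw [Finset.sum_add_distrib, hsplit, hgeo]
  have hmap : (Matrix.circulant fun j : Fin p => ypVar n p ζ (i : ℕ) (j : ℕ)).map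
        (aeval (uAux n q ζ))
      = 1 + Matrix.replicateCol (Fin 1) (fun _ : Fin p => C ((p : ℂ)⁻¹) * (X i - 1)) *
            Matrix.replicateRow (Fin 1) (fun _ : Fin p => (1 : MvPolynomial (Fin q) ℂ)) := by
    refine Matrix.ext fun a b => ?_
    rw [Matrix.map_apply, Matrix.circulant_apply,
      key1 n p q hp.pos hq hn' ζ hζ (i : ℕ) ((a - b : Fin p) : ℕ) i.isLt (Fin.is_lt _),
      hsum _ (Fin.is_lt _)]
    rw [Matrix.add_apply, Matrix.mul_apply, Matrix.one_apply]
    simp only [Matrix.replicateCol_apply, Matrix.replicateRow_apply, Fin.sum_univ_one]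
    have hvz : ((a - b : Fin p) : ℕ) = 0 ↔ a = b := by
      rw [show (0 : ℕ) = ((0 : Fin p) : ℕ) from (Fin.val_zero p).symm, Fin.val_inj, sub_eq_zero]
    by_cases hab : a = b
    · rw [if_pos (hvz.mpr hab), if_pos hab, mul_add, ← C_mul, inv_mul_cancel₀ hpc, C_1]
      ring
    · rw [if_neg (fun h => hab (hvz.mp h)), if_neg hab]
      ring
  calc (aeval (uAux n q ζ)) (thetaCirc p fun j => ypVar n p ζ (i : ℕ) j)
      = ((Matrix.circulant fun j : Fin p => ypVar n p ζ (i : ℕ) (j : ℕ)).map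
          (aeval (uAux n q ζ))).det := RingHom.map_det _ _
    _ = X i := by
        rw [hmap]
        refine (Matrix.det_one_add_replicateCol_mul_replicateRow (ι := Fin 1) _ _).trans ?_
        simp only [dotProduct, one_mul, Finset.sum_const, Finset.card_univ,
          Fintype.card_fin, nsmul_eq_mul]
        rw [show ((p : ℕ) : MvPolynomial (Fin q) ℂ) = C ((p : ℂ)) from (map_natCast C p).symm,
          ← mul_assoc, ← C_mul, mul_inv_cancel₀ hpc, C_1, one_mul]
        ring

/-- For a prime `p ∣ n`, the circulant determinants `Θ_p(y^(p)_0), …, Θ_p(y^(p)_{n_p-1})`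
are algebraically independent over ℂ: the map `ρ(z_i) = Θ_p(y^(p)_i)` is injective. -/
theorem stmt16 (n p : ℕ) [NeZero n] (hp : p.Prime) (hpn : p ∣ n)
    (ζ : ℂ) (hζ : IsPrimitiveRoot ζ n) :
    Function.Injective
      (aeval (R := ℂ)
        (fun i : Fin (n / p) => thetaCirc p (fun j => ypVar n p ζ (i : ℕ) j)) :
        MvPolynomial (Fin (n / p)) ℂ →ₐ[ℂ] MvPolynomial (ZMod n) ℂ) := by
  have hn : n ≠ 0 := NeZero.ne n
  have hn' : n = n / p * p := (Nat.div_mul_cancel hpn).symm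
  have hq : 0 < n / p := Nat.div_pos (Nat.le_of_dvd (Nat.pos_of_ne_zero hn) hpn) hp.pos
  have hcomp : (aeval (uAux n (n / p) ζ)).comp
      (aeval (R := ℂ)
        (fun i : Fin (n / p) => thetaCirc p (fun j => ypVar n p ζ (i : ℕ) j)))
      = AlgHom.id ℂ (MvPolynomial (Fin (n / p)) ℂ) := by
    apply MvPolynomial.algHom_ext
    intro i
    rw [AlgHom.comp_apply, aeval_X, AlgHom.id_apply]
    exact key2 n p (n / p) hp hq hn' ζ hζ i
  intro a b hab
  have h2 := congrArg (aeval (uAux n (n / p) ζ)) hab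
  rwa [← AlgHom.comp_apply, ← AlgHom.comp_apply, hcomp, AlgHom.id_apply, AlgHom.id_apply] at h2
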